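/- Let f : [a,b] ⊆ [0,∞) → [0,∞) be continuous, 0 ≤ a < b, s-convex in the second sense for s ∈ (0,1], symmetric about the midpoint (f(x) = f(a+b-x) for all x ∈ [a,b]), and p,q > 0. Then ∫_a^b (x-a)^p (b-x)^q f(x)^2 dx ≤ ((b-a)^{p+q+1}/2) { (f(a)^2+f(b)^2)[B(p+1,2s+q+1)+B(q+1,2s+p+1)] + 4 f(a) f(b) B(p+s+1,q+s+1) }. -/

import Mathlib

open MeasureTheory Set

lemma cont_rpow_const {p : ℝ} (hp : 0 < p) : Continuous fun x : ℝ => x ^ p :=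
  continuous_iff_continuousAt.2 fun x => Real.continuousAt_rpow_const x p (Or.inr hp.le)

noncomputable def eulerBeta (m n : ℝ) : ℝ := ∫ t in (0:ℝ)..1, t ^ (m - 1) * (1 - t) ^ (n - 1)

lemma eulerBeta_symm (m n : ℝ) : eulerBeta m n = eulerBeta n m := by
  have h := intervalIntegral.integral_comp_sub_left (a := (0:ℝ)) (b := 1)
    (fun t => t ^ (n - 1) * (1 - t) ^ (m - 1)) 1
  unfold eulerBeta
  norm_num at h
  rw [← h]
  congr 1
  ext x
  ring_nf

lemma beta_eval (m n : ℝ) :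
    (∫ t in (0:ℝ)..1, t ^ m * (1 - t) ^ n) = eulerBeta (m + 1) (n + 1) := by
  unfold eulerBeta
  norm_num

lemma beta_integrable {m n : ℝ} (hm : 0 < m) (hn : 0 < n) :
    IntervalIntegrable (fun t : ℝ => t ^ m * (1 - t) ^ n) volume 0 1 :=
  ((cont_rpow_const hm).mul
    ((cont_rpow_const hn).comp (continuous_const.sub continuous_id))).intervalIntegrable 0 1

theorem cor_2_2 (f : ℝ → ℝ) (a b : ℝ) (ha : 0 ≤ a) (hab : a < b)
    (hf : ContinuousOn f (Icc a b)) (hnn : ∀ x ∈ Icc a b, 0 ≤ f x) (s : ℝ) (hs0 : 0 < s) (hs1 : s ≤ 1)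
    (hsc : ∀ u v : ℝ, 0 ≤ u → 0 ≤ v → ∀ α β : ℝ, 0 ≤ α → 0 ≤ β → α + β = 1 →
      f (α * u + β * v) ≤ α ^ s * f u + β ^ s * f v)
    (hsym : ∀ x ∈ Icc a b, f x = f (a + b - x))
    (p q : ℝ) (hp : 0 < p) (hq : 0 < q) :
    ∫ x in a..b, (x - a) ^ p * (b - x) ^ q * f x ^ 2 ≤
      (b - a) ^ (p + q + 1) / 2 *
        ((f a ^ 2 + f b ^ 2) * (eulerBeta (p + 1) (2 * s + q + 1) + eulerBeta (q + 1) (2 * s + p + 1)) +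
          4 * f a * f b * eulerBeta (p + s + 1) (q + s + 1)) := by
  have hc : (0:ℝ) < b - a := by linarith
  have hb0 : (0:ℝ) ≤ b := le_trans ha hab.le
  set A := f a with hA
  set B := f b with hB
  set G : ℝ → ℝ := fun x =>
    (((b - x) / (b - a)) ^ s * A + ((x - a) / (b - a)) ^ s * B) ^ 2 / 2 +
    (((x - a) / (b - a)) ^ s * A + ((b - x) / (b - a)) ^ s * B) ^ 2 / 2 with hG
  -- pointwise bound
  have key : ∀ x ∈ Icc a b, f x ^ 2 ≤ G x := by
    intro x hx
    obtain ⟨hx1, hx2⟩ := hx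
    set α := (b - x) / (b - a) with hα'
    set β := (x - a) / (b - a) with hβ'
    have hα : 0 ≤ α := div_nonneg (by linarith) hc.le
    have hβ : 0 ≤ β := div_nonneg (by linarith) hc.le
    have hαβ : α + β = 1 := by
      rw [hα', hβ', ← add_div, div_eq_one_iff_eq hc.ne']; ring
    have hxe : x = α * a + β * b := by
      rw [hα', hβ']; field_simp; ring
    have hxe2 : a + b - x = β * a + α * b := by
      rw [hα', hβ']; field_simp; ring
    have h1 : f x ≤ α ^ s * A + β ^ s * B := by
      calc f x = f (α * a + β * b) := by rw [← hxe]
        _ ≤ α ^ s * f a + β ^ s * f b := hsc a b ha hb0 α β hα hβ hαβ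
    have h2 : f x ≤ β ^ s * A + α ^ s * B := by
      calc f x = f (a + b - x) := hsym x ⟨hx1, hx2⟩
        _ = f (β * a + α * b) := by rw [← hxe2]
        _ ≤ β ^ s * f a + α ^ s * f b := hsc a b ha hb0 β α hβ hα (by linarith)
    have hfx : 0 ≤ f x := hnn x ⟨hx1, hx2⟩
    have e1 : f x ^ 2 ≤ (α ^ s * A + β ^ s * B) ^ 2 := pow_le_pow_left₀ hfx h1 2
    have e2 : f x ^ 2 ≤ (β ^ s * A + α ^ s * B) ^ 2 := pow_le_pow_left₀ hfx h2 2
    simp only [hG]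
    linarith
  -- continuity / integrability
  have hcw : Continuous fun x : ℝ => (x - a) ^ p * (b - x) ^ q :=
    ((cont_rpow_const hp).comp (continuous_id.sub continuous_const)).mul
      ((cont_rpow_const hq).comp (continuous_const.sub continuous_id))
  have hcG : Continuous G := by
    have c1 : Continuous fun x : ℝ => ((b - x) / (b - a)) ^ s :=
      (cont_rpow_const hs0).comp ((continuous_const.sub continuous_id).div_const _)
    have c2 : Continuous fun x : ℝ => ((x - a) / (b - a)) ^ s :=
      (cont_rpow_const hs0).comp ((continuous_id.sub continuous_const).div_const _)
    exact (((c1.mul continuous_const).add (c2.mul continuous_const)).pow 2).div_const 2 |>.add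
      ((((c2.mul continuous_const).add (c1.mul continuous_const)).pow 2).div_const 2)
  have hi1 : IntervalIntegrable (fun x => (x - a) ^ p * (b - x) ^ q * f x ^ 2) volume a b := by
    apply ContinuousOn.intervalIntegrable
    rw [uIcc_of_le hab.le]
    exact hcw.continuousOn.mul (hf.pow 2)
  have hi2 : IntervalIntegrable (fun x => (x - a) ^ p * (b - x) ^ q * G x) volume a b :=
    (hcw.mul hcG).intervalIntegrable a b
  have hmono : (∫ x in a..b, (x - a) ^ p * (b - x) ^ q * f x ^ 2) ≤
      ∫ x in a..b, (x - a) ^ p * (b - x) ^ q * G x := by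
    apply intervalIntegral.integral_mono_on hab.le hi1 hi2
    intro x hx
    exact mul_le_mul_of_nonneg_left (key x hx)
      (mul_nonneg (Real.rpow_nonneg (by linarith [hx.1]) p)
        (Real.rpow_nonneg (by linarith [hx.2]) q))
  -- substitution
  set W : ℝ → ℝ := fun x => (x - a) ^ p * (b - x) ^ q * G x with hWdef
  have hsub : (∫ x in a..b, W x) = (b - a) * ∫ t in (0:ℝ)..1, W ((b - a) * t + a) := by
    have h := intervalIntegral.integral_comp_mul_add (a := (0:ℝ)) (b := 1) W hc.ne' a
    rw [show (b - a) * 0 + a = a by ring, show (b - a) * 1 + a = b by ring] at h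
    rw [h, smul_eq_mul, ← mul_assoc, mul_inv_cancel₀ hc.ne', one_mul]
  -- integrand identity on [0,1]
  have hW : ∀ t ∈ Icc (0:ℝ) 1, W ((b - a) * t + a) =
      (b - a) ^ (p + q) * ((A ^ 2 + B ^ 2) / 2 *
        (t ^ (p + 2 * s) * (1 - t) ^ q + t ^ p * (1 - t) ^ (q + 2 * s)) +
        2 * A * B * (t ^ (p + s) * (1 - t) ^ (q + s))) := by
    intro t ⟨ht0, ht1⟩
    have h1t : (0:ℝ) ≤ 1 - t := by linarith
    have e1 : (b - a) * t + a - a = (b - a) * t := by ring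
    have e2 : b - ((b - a) * t + a) = (b - a) * (1 - t) := by ring
    have d1 : ((b - a) * (1 - t)) / (b - a) = 1 - t := by
      rw [mul_comm, mul_div_assoc, div_self hc.ne', mul_one]
    have d2 : ((b - a) * t) / (b - a) = t := by
      rw [mul_comm, mul_div_assoc, div_self hc.ne', mul_one]
    have m1 : ((b - a) * t) ^ p = (b - a) ^ p * t ^ p := Real.mul_rpow hc.le ht0
    have m2 : ((b - a) * (1 - t)) ^ q = (b - a) ^ q * (1 - t) ^ q := Real.mul_rpow hc.le h1t
    have r0 : (b - a) ^ (p + q) = (b - a) ^ p * (b - a) ^ q := Real.rpow_add hc p q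
    have r1 : t ^ (p + 2 * s) = t ^ p * t ^ s * t ^ s := by
      rw [show p + 2 * s = p + s + s by ring,
        Real.rpow_add' ht0 (by positivity : p + s + s ≠ 0),
        Real.rpow_add' ht0 (by positivity : p + s ≠ 0)]
    have r2 : (1 - t) ^ (q + 2 * s) = (1 - t) ^ q * (1 - t) ^ s * (1 - t) ^ s := by
      rw [show q + 2 * s = q + s + s by ring,
        Real.rpow_add' h1t (by positivity : q + s + s ≠ 0),
        Real.rpow_add' h1t (by positivity : q + s ≠ 0)]
    have r3 : t ^ (p + s) = t ^ p * t ^ s := Real.rpow_add' ht0 (by positivity : p + s ≠ 0)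
    have r4 : (1 - t) ^ (q + s) = (1 - t) ^ q * (1 - t) ^ s :=
      Real.rpow_add' h1t (by positivity : q + s ≠ 0)
    simp only [hWdef, hG, e1, e2, d1, d2, m1, m2, r0, r1, r2, r3, r4]
    ring
  -- compute the t-integral
  have hIa : IntervalIntegrable (fun t : ℝ => t ^ (p + 2 * s) * (1 - t) ^ q) volume 0 1 :=
    beta_integrable (by positivity) hq
  have hIb : IntervalIntegrable (fun t : ℝ => t ^ p * (1 - t) ^ (q + 2 * s)) volume 0 1 :=
    beta_integrable hp (by positivity)
  have hIc : IntervalIntegrable (fun t : ℝ => t ^ (p + s) * (1 - t) ^ (q + s)) volume 0 1 :=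
    beta_integrable (by positivity) (by positivity)
  have hval : (∫ t in (0:ℝ)..1, W ((b - a) * t + a)) =
      (b - a) ^ (p + q) * ((A ^ 2 + B ^ 2) / 2 *
        (eulerBeta (p + 2 * s + 1) (q + 1) + eulerBeta (p + 1) (q + 2 * s + 1)) +
        2 * A * B * eulerBeta (p + s + 1) (q + s + 1)) := by
    rw [intervalIntegral.integral_congr (g := fun t =>
      (b - a) ^ (p + q) * ((A ^ 2 + B ^ 2) / 2 *
        (t ^ (p + 2 * s) * (1 - t) ^ q + t ^ p * (1 - t) ^ (q + 2 * s)) +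
        2 * A * B * (t ^ (p + s) * (1 - t) ^ (q + s))))
      (fun t ht => hW t (by rwa [uIcc_of_le (by norm_num : (0:ℝ) ≤ 1)] at ht))]
    rw [intervalIntegral.integral_const_mul]
    congr 1
    rw [intervalIntegral.integral_add (((hIa.add hIb)).const_mul _) (hIc.const_mul _),
      intervalIntegral.integral_const_mul, intervalIntegral.integral_const_mul,
      intervalIntegral.integral_add hIa hIb, beta_eval, beta_eval, beta_eval]
  -- final assembly
  have hβ1 : eulerBeta (p + 2 * s + 1) (q + 1) = eulerBeta (q + 1) (2 * s + p + 1) := by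
    rw [eulerBeta_symm, show p + 2 * s + 1 = 2 * s + p + 1 by ring]
  have hβ2 : eulerBeta (p + 1) (q + 2 * s + 1) = eulerBeta (p + 1) (2 * s + q + 1) := by
    rw [show q + 2 * s + 1 = 2 * s + q + 1 by ring]
  have hpow : (b - a) ^ (p + q + 1) = (b - a) * (b - a) ^ (p + q) := by
    rw [Real.rpow_add hc, Real.rpow_one]; ring
  calc (∫ x in a..b, (x - a) ^ p * (b - x) ^ q * f x ^ 2)
      ≤ ∫ x in a..b, W x := hmono
    _ = (b - a) * ∫ t in (0:ℝ)..1, W ((b - a) * t + a) := hsub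
    _ = (b - a) ^ (p + q + 1) / 2 *
        ((A ^ 2 + B ^ 2) * (eulerBeta (p + 1) (2 * s + q + 1) + eulerBeta (q + 1) (2 * s + p + 1)) +
          4 * A * B * eulerBeta (p + s + 1) (q + s + 1)) := by
        rw [hval, hβ1, hβ2, hpow]; ring
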